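/- arXiv:1505.02610 — 2 statements merged into one kernel-verified Lean document; each statement's English description precedes it below -/
import Mathlib

section
/- (Key Lemma) Let (M, m) be a maximally reductive pair, let A ⊆ H be a subset that crosses M with m ∈ A, and suppose there exists a ∈ A with σ(a) ∉ A and |a| − cut(A) > 0. Then A ∪ M or (H ∖ A) ∩ M is a side of a reductive ideal edge. -/
open Finset

/-- `cut d A = ∑_{x ∈ A} ∑_{y ∉ A} d x y`, the total weight of pairs
separated by the partition `{A, H ∖ A}`. -/
def cut {H : Type*} [Fintype H] [DecidableEq H] {Λ : Type*}
    [AddCommGroup Λ] [LinearOrder Λ] [IsOrderedAddMonoid Λ] (d : H → H → Λ) (A : Finset H) : Λ :=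
  ∑ x ∈ A, ∑ y ∈ Aᶜ, d x y

/-- `(X, x)` is a reductive pair if `x ∈ X`, `σ x ∉ X` and `|x| - cut X > 0`,
where `|x| = cut {x}`. -/
def IsReductivePair {H : Type*} [Fintype H] [DecidableEq H] {Λ : Type*}
    [AddCommGroup Λ] [LinearOrder Λ] [IsOrderedAddMonoid Λ] (d : H → H → Λ) (σ : H → H)
    (X : Finset H) (x : H) : Prop :=
  x ∈ X ∧ σ x ∉ X ∧ 0 < cut d {x} - cut d X

/-- `X` is a side of a reductive ideal edge if some `x` with `x` and `σ x` on
opposite sides of the partition `{X, H ∖ X}` satisfies `|x| - cut X > 0`. -/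
def IsSideOfReductiveIdealEdge {H : Type*} [Fintype H] [DecidableEq H] {Λ : Type*}
    [AddCommGroup Λ] [LinearOrder Λ] [IsOrderedAddMonoid Λ] (d : H → H → Λ) (σ : H → H)
    (X : Finset H) : Prop :=
  ∃ x : H, ((x ∈ X ∧ σ x ∉ X) ∨ (x ∉ X ∧ σ x ∈ X)) ∧ 0 < cut d {x} - cut d X

/-- `(M, m)` is maximally reductive: it is a reductive pair whose reduction
`|m| - cut M` is at least that of any reductive pair. -/
def IsMaximallyReductivePair {H : Type*} [Fintype H] [DecidableEq H] {Λ : Type*}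
    [AddCommGroup Λ] [LinearOrder Λ] [IsOrderedAddMonoid Λ] (d : H → H → Λ) (σ : H → H)
    (M : Finset H) (m : H) : Prop :=
  IsReductivePair d σ M m ∧
    ∀ X x, IsReductivePair d σ X x → cut d {x} - cut d X ≤ cut d {m} - cut d M

section Aux
variable {H : Type*} [Fintype H] [DecidableEq H] {Λ : Type*}
    [AddCommGroup Λ] [LinearOrder Λ] [IsOrderedAddMonoid Λ]

lemma sum_if_mem (B : Finset H) (f : H → Λ) :
    ∑ x ∈ univ, (if x ∈ B then f x else 0) = ∑ x ∈ B, f x := by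
  rw [Finset.sum_ite_mem, Finset.univ_inter]

lemma cut_eq_sum_univ (d : H → H → Λ) (A : Finset H) :
    cut d A = ∑ x ∈ univ, ∑ y ∈ univ,
      (if x ∈ A then (if y ∈ A then 0 else d x y) else 0) := by
  unfold cut
  rw [← sum_if_mem A (fun x => ∑ y ∈ Aᶜ, d x y)]
  refine Finset.sum_congr rfl fun x _ => ?_
  rw [← sum_if_mem Aᶜ (fun y => d x y)]
  by_cases h : x ∈ A <;> simp only [h, if_true, if_false]
  · refine Finset.sum_congr rfl fun y _ => ?_
    by_cases hy : y ∈ A <;> simp [hy]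
  · simp

lemma cut_compl (d : H → H → Λ) (hsymm : ∀ x y, d x y = d y x) (A : Finset H) :
    cut d Aᶜ = cut d A := by
  unfold cut
  rw [compl_compl, Finset.sum_comm]
  exact Finset.sum_congr rfl fun y _ => Finset.sum_congr rfl fun x _ => hsymm x y

lemma cut_submod (d : H → H → Λ) (hnonneg : ∀ x y, 0 ≤ d x y) (A M : Finset H) :
    cut d (A ∪ M) + cut d (A ∩ M) ≤ cut d A + cut d M := by
  simp only [cut_eq_sum_univ d]
  rw [← Finset.sum_add_distrib, ← Finset.sum_add_distrib]
  refine Finset.sum_le_sum fun x _ => ?_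
  rw [← Finset.sum_add_distrib, ← Finset.sum_add_distrib]
  refine Finset.sum_le_sum fun y _ => ?_
  by_cases hxa : x ∈ A <;> by_cases hxm : x ∈ M <;> by_cases hya : y ∈ A <;>
    by_cases hym : y ∈ M <;>
    simp [Finset.mem_union, Finset.mem_inter, hxa, hxm, hya, hym, hnonneg x y]

lemma cut_posimod (d : H → H → Λ) (hsymm : ∀ x y, d x y = d y x)
    (hnonneg : ∀ x y, 0 ≤ d x y) (A M : Finset H) :
    cut d (A ∩ Mᶜ) + cut d (Aᶜ ∩ M) ≤ cut d A + cut d M := by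
  have h := cut_submod d hnonneg A Mᶜ
  have e1 : cut d Mᶜ = cut d M := cut_compl d hsymm M
  have e2 : cut d (A ∪ Mᶜ) = cut d (Aᶜ ∩ M) := by
    rw [← cut_compl d hsymm (Aᶜ ∩ M)]
    congr 1
    rw [Finset.compl_inter, compl_compl]
  rw [e1, e2, add_comm] at h
  exact h
end Aux

lemma cut_union_le {H : Type*} [Fintype H] [DecidableEq H] {Λ : Type*}
    [AddCommGroup Λ] [LinearOrder Λ] [IsOrderedAddMonoid Λ] (d : H → H → Λ) (σ : H → H)
    (hnonneg : ∀ x y, 0 ≤ d x y) (M : Finset H) (m : H)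
    (hMm : IsMaximallyReductivePair d σ M m) (A : Finset H) (hmA : m ∈ A) :
    cut d (A ∪ M) ≤ cut d A := by
  obtain ⟨⟨hmM, hsm, hr⟩, hmax⟩ := hMm
  have hsub := cut_submod d hnonneg A M
  have hcM : cut d M ≤ cut d (A ∩ M) := by
    by_cases hp : 0 < cut d {m} - cut d (A ∩ M)
    · have hred : IsReductivePair d σ (A ∩ M) m :=
        ⟨Finset.mem_inter.mpr ⟨hmA, hmM⟩, fun h => hsm (Finset.mem_inter.mp h).2, hp⟩
      exact (sub_le_sub_iff_left _).mp (hmax _ _ hred)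
    · push_neg at hp
      have h1 : cut d {m} ≤ cut d (A ∩ M) := sub_nonpos.mp hp
      exact ((sub_pos.mp hr).trans_le h1).le
  have h3 := (add_le_add (le_refl (cut d (A ∪ M))) hcM).trans hsub
  exact le_of_add_le_add_right h3


/-- **Key Lemma.** Let `(M, m)` be a maximally reductive pair, let `A` cross `M`
with `m ∈ A`, and suppose some `a ∈ A` has `σ a ∉ A` and `|a| - cut A > 0`.
Then `A ∪ M` or `(H ∖ A) ∩ M` is a side of a reductive ideal edge. -/
theorem key_lemma {H : Type*} [Fintype H] [DecidableEq H] {Λ : Type*}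
    [AddCommGroup Λ] [LinearOrder Λ] [IsOrderedAddMonoid Λ] (d : H → H → Λ)
    (hsymm : ∀ x y, d x y = d y x) (hnonneg : ∀ x y, 0 ≤ d x y)
    (σ : H → H) (hinv : ∀ x, σ (σ x) = x) (hfix : ∀ x, σ x ≠ x)
    (hσnorm : ∀ x, cut d {σ x} = cut d {x})
    (M : Finset H) (m : H) (hMm : IsMaximallyReductivePair d σ M m)
    (A : Finset H) (hmA : m ∈ A)
    (hcross : (A ∩ M).Nonempty ∧ (A \ M).Nonempty ∧ (M \ A).Nonempty ∧
      ((A ∪ M)ᶜ).Nonempty)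
    (a : H) (haA : a ∈ A) (hsa : σ a ∉ A) (ha : 0 < cut d {a} - cut d A) :
    IsSideOfReductiveIdealEdge d σ (A ∪ M) ∨
      IsSideOfReductiveIdealEdge d σ (Aᶜ ∩ M) := by
  by_cases h1 : σ a ∈ M
  · by_cases h2 : σ m ∈ A
    · right
      have hMc : IsMaximallyReductivePair d σ Mᶜ (σ m) := by
        obtain ⟨⟨hmM, hsm, hr⟩, hmax⟩ := hMm
        have e1 : cut d {σ m} = cut d {m} := hσnorm m
        have e2 : cut d Mᶜ = cut d M := cut_compl d hsymm M
        refine ⟨⟨Finset.mem_compl.mpr hsm, ?_, by rw [e1, e2]; exact hr⟩,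
          fun X x h => by rw [e1, e2]; exact hmax X x h⟩
        rw [hinv m]; simp [Finset.mem_compl, hmM]
      have hL := cut_union_le d σ hnonneg Mᶜ (σ m) hMc A h2
      have e3 : cut d (A ∪ Mᶜ) = cut d (Aᶜ ∩ M) := by
        rw [← cut_compl d hsymm (Aᶜ ∩ M)]
        congr 1
        rw [Finset.compl_inter, compl_compl]
      rw [e3] at hL
      refine ⟨σ a, Or.inl ⟨Finset.mem_inter.mpr ⟨Finset.mem_compl.mpr hsa, h1⟩, ?_⟩, ?_⟩
      · rw [hinv a]; simp [Finset.mem_inter, haA]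
      · rw [hσnorm a]
        exact lt_of_lt_of_le ha (sub_le_sub_left hL _)
    · by_cases h3 : 0 < cut d {m} - cut d (A ∪ M)
      · exact Or.inl ⟨m, Or.inl ⟨Finset.mem_union_left _ hmA,
          by simp [Finset.mem_union, h2, hMm.1.2.1]⟩, h3⟩
      · by_cases h4 : 0 < cut d {a} - cut d (Aᶜ ∩ M)
        · right
          refine ⟨σ a, Or.inl ⟨Finset.mem_inter.mpr ⟨Finset.mem_compl.mpr hsa, h1⟩, ?_⟩,
            by rw [hσnorm a]; exact h4⟩
          rw [hinv a]; simp [Finset.mem_inter, haA]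
        · exfalso
          push_neg at h3 h4
          have hm3 : cut d {m} ≤ cut d (A ∪ M) := sub_nonpos.mp h3
          have hm4 : cut d {a} ≤ cut d (Aᶜ ∩ M) := sub_nonpos.mp h4
          have hL : cut d (A ∪ M) ≤ cut d A := cut_union_le d σ hnonneg M m hMm A hmA
          obtain ⟨⟨hmM, hsmM, hr⟩, hmax⟩ := hMm
          have hrr : cut d M < cut d {m} := sub_pos.mp hr
          have hss : cut d A < cut d {a} := sub_pos.mp ha
          by_cases h5 : a ∈ M
          · have hsub := cut_submod d hnonneg A M
            have k3 : cut d (A ∩ M) + cut d {m} ≤ cut d A + cut d M :=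
              (add_le_add (le_refl _) hm3).trans (by rw [add_comm]; exact hsub)
            have hIle : cut d (A ∩ M) ≤ cut d A + cut d M - cut d {m} :=
              le_sub_iff_add_le.mpr k3
            have h6 : cut d A + cut d M - cut d {m} < cut d A := by
              rw [sub_lt_iff_lt_add]; exact add_lt_add_right hrr _
            have hpos : 0 < cut d {a} - cut d (A ∩ M) :=
              sub_pos.mpr ((hIle.trans_lt h6).trans hss)
            have hred : IsReductivePair d σ (A ∩ M) a :=
              ⟨Finset.mem_inter.mpr ⟨haA, h5⟩, fun h => hsa (Finset.mem_inter.mp h).1, hpos⟩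
            have hmx := hmax _ _ hred
            have h8 : cut d {a} - (cut d A + cut d M - cut d {m}) ≤ cut d {m} - cut d M :=
              (sub_le_sub_left hIle _).trans hmx
            have h9 : cut d {a} ≤ cut d A := by
              have h10 := add_le_add_left h8 (cut d A + cut d M - cut d {m})
              calc cut d {a}
                  = cut d {a} - (cut d A + cut d M - cut d {m})
                    + (cut d A + cut d M - cut d {m}) := by abel
                _ ≤ cut d {m} - cut d M + (cut d A + cut d M - cut d {m}) := h10
                _ = cut d A := by abel
            exact absurd h9 (not_le.mpr hss)
          · have hposi := cut_posimod d hsymm hnonneg A M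
            have k1 : cut d (A ∩ Mᶜ) + cut d {a} ≤ cut d A + cut d M :=
              (add_le_add (le_refl _) hm4).trans hposi
            have hIle : cut d (A ∩ Mᶜ) ≤ cut d A + cut d M - cut d {a} :=
              le_sub_iff_add_le.mpr k1
            have hMa : cut d M < cut d {a} := hrr.trans_le (hm3.trans (hL.trans hss.le))
            have h6 : cut d A + cut d M - cut d {a} < cut d A := by
              rw [sub_lt_iff_lt_add]; exact add_lt_add_right hMa _
            have hpos : 0 < cut d {a} - cut d (A ∩ Mᶜ) :=
              sub_pos.mpr ((hIle.trans_lt h6).trans hss)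
            have hred : IsReductivePair d σ (A ∩ Mᶜ) a :=
              ⟨Finset.mem_inter.mpr ⟨haA, Finset.mem_compl.mpr h5⟩,
                fun h => (Finset.mem_compl.mp (Finset.mem_inter.mp h).2) h1, hpos⟩
            have hmx := hmax _ _ hred
            have h7 : cut d {a} - (cut d A + cut d M - cut d {a}) ≤ cut d {m} - cut d M :=
              (sub_le_sub_left hIle _).trans hmx
            have hma : cut d {m} ≤ cut d A := hm3.trans hL
            have h8 : cut d {a} + cut d {a} ≤ cut d A + cut d {m} := by
              have h10 := add_le_add_left h7 (cut d A + cut d M - cut d {a} + cut d {a})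
              calc cut d {a} + cut d {a}
                  = cut d {a} - (cut d A + cut d M - cut d {a})
                    + (cut d A + cut d M - cut d {a} + cut d {a}) := by abel
                _ ≤ cut d {m} - cut d M
                    + (cut d A + cut d M - cut d {a} + cut d {a}) := h10
                _ = cut d A + cut d {m} := by abel
            have h9 : cut d A + cut d {m} < cut d {a} + cut d {a} :=
              add_lt_add_of_lt_of_le hss (hma.trans hss.le)
            exact absurd h8 (not_le.mpr h9)
  · left
    have hL := cut_union_le d σ hnonneg M m hMm A hmA
    exact ⟨a, Or.inl ⟨Finset.mem_union_left _ haA,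
      by simp [Finset.mem_union, hsa, h1]⟩,
      lt_of_lt_of_le ha (sub_le_sub_left hL _)⟩
end

section
/- Let (M, m) be a maximally reductive pair and A ⊆ H. Suppose a, m ∈ A ∩ M, σ(a) ∉ A, σ(m) ∉ A ∪ M, and |a| − cut(A) > 0. Then (A ∪ M, m) is a reductive pair; in particular |m| − cut(A ∪ M) > 0. -/
open Finset

lemma cut_eq_sum_ite' {H : Type*} [Fintype H] [DecidableEq H] {Λ : Type*}
    [AddCommGroup Λ] [LinearOrder Λ] [IsOrderedAddMonoid Λ] (d : H → H → Λ) (A : Finset H) :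
    cut d A = ∑ x : H, ∑ y : H, (if x ∈ A ∧ y ∉ A then d x y else 0) := by
  rw [cut]
  symm
  have h : ∀ x : H, (∑ y : H, if x ∈ A ∧ y ∉ A then d x y else 0)
      = if x ∈ A then ∑ y ∈ Aᶜ, d x y else 0 := by
    intro x
    by_cases hx : x ∈ A
    · simp only [hx, true_and, if_true]
      rw [← Finset.sum_filter]
      congr 1
      ext y
      simp
    · simp [hx]
  rw [Finset.sum_congr rfl (fun x _ => h x), ← Finset.sum_filter]
  congr 1
  ext x
  simp

lemma cut_submodular' {H : Type*} [Fintype H] [DecidableEq H] {Λ : Type*}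
    [AddCommGroup Λ] [LinearOrder Λ] [IsOrderedAddMonoid Λ] (d : H → H → Λ) (hnonneg : ∀ x y, 0 ≤ d x y)
    (A B : Finset H) :
    cut d (A ∪ B) + cut d (A ∩ B) ≤ cut d A + cut d B := by
  rw [cut_eq_sum_ite' d (A ∪ B), cut_eq_sum_ite' d (A ∩ B), cut_eq_sum_ite' d A,
    cut_eq_sum_ite' d B, ← Finset.sum_add_distrib, ← Finset.sum_add_distrib]
  apply Finset.sum_le_sum
  intro x _
  rw [← Finset.sum_add_distrib, ← Finset.sum_add_distrib]
  apply Finset.sum_le_sum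
  intro y _
  by_cases hxA : x ∈ A <;> by_cases hxB : x ∈ B <;> by_cases hyA : y ∈ A <;>
    by_cases hyB : y ∈ B <;>
    simp [Finset.mem_union, Finset.mem_inter, hxA, hxB, hyA, hyB, hnonneg x y]

lemma key_arith {Λ : Type*} [AddCommGroup Λ] [LinearOrder Λ] [IsOrderedAddMonoid Λ] (u v w x y z : Λ)
    (h1 : u + v ≤ w + x) (h2 : y - u ≤ 0) (h3 : 0 < z - w) (h4 : 0 < y - x) :
    y - x < z - v := by
  have h5 : 0 ≤ u - y := by simpa using neg_nonneg.mpr h2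
  have h6 : 0 ≤ w + x - (u + v) := sub_nonneg.mpr h1
  calc y - x < (y - x) + ((z - w) + (u - y) + (w + x - (u + v))) :=
        lt_add_of_pos_right _
          (add_pos_of_pos_of_nonneg (add_pos_of_pos_of_nonneg h3 h5) h6)
    _ = z - v := by abel

/-- Case of the Key Lemma: if `a, m ∈ A ∩ M`, `σ a ∉ A`, `σ m ∉ A ∪ M` and
`|a| - cut A > 0`, then `(A ∪ M, m)` is a reductive pair;
in particular `|m| - cut (A ∪ M) > 0`. -/
theorem key_lemma_case_union_m {H : Type*} [Fintype H] [DecidableEq H] {Λ : Type*}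
    [AddCommGroup Λ] [LinearOrder Λ] [IsOrderedAddMonoid Λ] (d : H → H → Λ)
    (hsymm : ∀ x y, d x y = d y x) (hnonneg : ∀ x y, 0 ≤ d x y)
    (σ : H → H) (hinv : ∀ x, σ (σ x) = x) (hfix : ∀ x, σ x ≠ x)
    (hσnorm : ∀ x, cut d {σ x} = cut d {x})
    (M : Finset H) (m : H) (hMm : IsMaximallyReductivePair d σ M m)
    (A : Finset H) (a : H)
    (haAM : a ∈ A ∩ M) (hmAM : m ∈ A ∩ M)
    (hsa : σ a ∉ A) (hsm : σ m ∉ A ∪ M)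
    (ha : 0 < cut d {a} - cut d A) :
    IsReductivePair d σ (A ∪ M) m ∧ 0 < cut d {m} - cut d (A ∪ M) := by
  have hsub : cut d (A ∪ M) + cut d (A ∩ M) ≤ cut d A + cut d M :=
    cut_submodular' d hnonneg A M
  obtain ⟨hmM, hsmM, hM⟩ := hMm.1
  have hmem : m ∈ A ∪ M := Finset.mem_union_left M (Finset.mem_inter.mp hmAM).1
  have key : 0 < cut d {m} - cut d (A ∪ M) := by
    by_contra hcon
    push_neg at hcon
    have hstrict : cut d {m} - cut d M < cut d {a} - cut d (A ∩ M) :=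
      key_arith _ _ _ _ _ _ hsub hcon ha hM
    have hred : IsReductivePair d σ (A ∩ M) a :=
      ⟨haAM, fun h => hsa (Finset.mem_inter.mp h).1, hM.trans hstrict⟩
    exact absurd hstrict (not_lt.mpr (hMm.2 _ _ hred))
  exact ⟨⟨hmem, hsm, key⟩, key⟩
end
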